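/- With g_k = (2/(M+1))·sin²(π(2k+1)/(2(M+1))) on {0,…,M}, for fixed integers n ≥ 0 and δ ≥ 0, one has ∑_{k=n}^{M-n} √(g_k g_{k+δ}) ≥ 1 − (1/2)(πδ/(M+1))² − C/M³ for some constant C depending only on n and δ, for all sufficiently large M. -/

import Mathlib

/-- The distribution `g_k = (2/(M+1)) sin²(π(2k+1)/(2(M+1)))` on `{0,…,M}`. -/
noncomputable def gdist (M k : ℕ) : ℝ :=
  (2 / ((M : ℝ) + 1)) * (Real.sin (Real.pi * (2 * (k : ℝ) + 1) / (2 * ((M : ℝ) + 1)))) ^ 2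

/-- Telescoping sum of cosines in arithmetic progression. -/
lemma cos_telescope (θ c : ℝ) (m : ℕ) :
    (∑ k ∈ Finset.range m, Real.cos (c + θ * (2 * (k : ℝ) + 1))) * (2 * Real.sin θ)
      = Real.sin (c + θ * (2 * (m : ℝ))) - Real.sin c := by
  induction m with
  | zero => simp
  | succ m ih =>
    rw [Finset.sum_range_succ, add_mul, ih]
    have h : Real.sin (c + θ * (2 * ((m : ℝ) + 1))) - Real.sin (c + θ * (2 * (m : ℝ)))
        = 2 * Real.sin θ * Real.cos (c + θ * (2 * (m : ℝ) + 1)) := by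
      rw [Real.sin_sub_sin]
      have h1 : (c + θ * (2 * ((m : ℝ) + 1)) - (c + θ * (2 * (m : ℝ)))) / 2 = θ := by ring
      have h2 : (c + θ * (2 * ((m : ℝ) + 1)) + (c + θ * (2 * (m : ℝ)))) / 2
          = c + θ * (2 * (m : ℝ) + 1) := by ring
      rw [h1, h2]
    push_cast
    push_cast at h
    linarith [h]

/-- Pointwise lower bound for the square-root terms. -/
lemma term_ge (M k δ : ℕ) (hM0 : (0 : ℝ) < (M : ℝ) + 1) :
    (1 / ((M : ℝ) + 1)) * (Real.cos (Real.pi / ((M : ℝ) + 1) * (δ : ℝ))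
        - Real.cos (Real.pi / ((M : ℝ) + 1) * (2 * (k : ℝ) + (δ : ℝ) + 1)))
      ≤ Real.sqrt (gdist M k * gdist M (k + δ)) := by
  have hne : ((M : ℝ) + 1) ≠ 0 := ne_of_gt hM0
  have hprod : gdist M k * gdist M (k + δ)
      = ((2 / ((M : ℝ) + 1)) * (Real.sin (Real.pi * (2 * (k : ℝ) + 1) / (2 * ((M : ℝ) + 1)))
          * Real.sin (Real.pi * (2 * ((k : ℝ) + (δ : ℝ)) + 1) / (2 * ((M : ℝ) + 1))))) ^ 2 := by
    unfold gdist
    push_cast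
    ring
  rw [hprod, Real.sqrt_sq_eq_abs]
  have hid : (1 / ((M : ℝ) + 1)) * (Real.cos (Real.pi / ((M : ℝ) + 1) * (δ : ℝ))
        - Real.cos (Real.pi / ((M : ℝ) + 1) * (2 * (k : ℝ) + (δ : ℝ) + 1)))
      = (2 / ((M : ℝ) + 1)) * (Real.sin (Real.pi * (2 * (k : ℝ) + 1) / (2 * ((M : ℝ) + 1)))
          * Real.sin (Real.pi * (2 * ((k : ℝ) + (δ : ℝ)) + 1) / (2 * ((M : ℝ) + 1)))) := by
    have e1 : Real.pi / ((M : ℝ) + 1) * (δ : ℝ)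
        = Real.pi * (2 * ((k : ℝ) + (δ : ℝ)) + 1) / (2 * ((M : ℝ) + 1))
          - Real.pi * (2 * (k : ℝ) + 1) / (2 * ((M : ℝ) + 1)) := by
      field_simp
      ring
    have e2 : Real.pi / ((M : ℝ) + 1) * (2 * (k : ℝ) + (δ : ℝ) + 1)
        = Real.pi * (2 * ((k : ℝ) + (δ : ℝ)) + 1) / (2 * ((M : ℝ) + 1))
          + Real.pi * (2 * (k : ℝ) + 1) / (2 * ((M : ℝ) + 1)) := by
      field_simp
      ring
    rw [e1, e2, Real.cos_sub_cos]
    set B := Real.pi * (2 * ((k : ℝ) + (δ : ℝ)) + 1) / (2 * ((M : ℝ) + 1))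
    set A := Real.pi * (2 * (k : ℝ) + 1) / (2 * ((M : ℝ) + 1))
    have h1 : (B - A + (B + A)) / 2 = B := by ring
    have h2 : (B - A - (B + A)) / 2 = -A := by ring
    rw [h1, h2, Real.sin_neg]
    ring
  rw [hid]
  exact le_abs_self _

set_option maxHeartbeats 4000000 in
/-- For fixed `n, δ`, the overlap sum satisfies
`∑_{k=n}^{M-n} √(g_k g_{k+δ}) ≥ 1 − ½(πδ/(M+1))² − C/M³` for all large `M`. -/
theorem sum_sqrt_gdist_asymptotic (n δ : ℕ) :
    ∃ C : ℝ, ∃ M₀ : ℕ, ∀ M : ℕ, M₀ ≤ M →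
      ∑ k ∈ Finset.Icc n (M - n), Real.sqrt (gdist M k * gdist M (k + δ)) ≥
        1 - (1 / 2) * (Real.pi * (δ : ℝ) / ((M : ℝ) + 1)) ^ 2 - C / (M : ℝ) ^ 3 := by
  refine ⟨Real.pi ^ 3 * (n : ℝ) ^ 3, 7 * n + 2 * δ + 7, fun M hM => ?_⟩
  have hn2 : 2 * n ≤ M := by omega
  have hδ2 : 2 * δ ≤ M + 1 := by omega
  have hM7 : 7 ≤ M := by omega
  have hM0 : (0 : ℝ) < (M : ℝ) + 1 := by positivity
  have hMR : (7 : ℝ) ≤ (M : ℝ) := by exact_mod_cast hM7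
  have hpi := Real.pi_pos
  have hpi4 : Real.pi < 3.15 := by
    linarith [Real.pi_lt_d2]
  set θ : ℝ := Real.pi / ((M : ℝ) + 1) with hθdef
  have hθpos : 0 < θ := by positivity
  have hθM : ((M : ℝ) + 1) * θ = Real.pi := by
    rw [hθdef]; field_simp
  have hθle : θ ≤ Real.pi / 8 := by
    rw [hθdef]
    rw [div_le_div_iff₀ hM0 (by norm_num)]
    nlinarith
  have hθlt : θ < Real.pi := by nlinarith
  have hsin : 0 < Real.sin θ := Real.sin_pos_of_pos_of_lt_pi hθpos hθlt
  have hθ1 : θ ≤ 1 := by nlinarith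
  -- lower bound sin θ ≥ (3/4) θ
  have hsinlb : (3 / 4 : ℝ) * θ ≤ Real.sin θ := by
    have h1 := Real.sin_gt_sub_cube hθpos
    have h2 : θ * (1 - θ) ≥ 0 := mul_nonneg hθpos.le (by linarith)
    have h3 : θ^2 * (1 - θ) ≥ 0 := mul_nonneg (sq_nonneg θ) (by linarith)
    nlinarith
  -- sum of lower bounds
  have hsum : ∑ k ∈ Finset.Icc n (M - n),
      (1 / ((M : ℝ) + 1)) * (Real.cos (θ * (δ : ℝ)) - Real.cos (θ * (2 * (k : ℝ) + (δ : ℝ) + 1)))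
      ≤ ∑ k ∈ Finset.Icc n (M - n), Real.sqrt (gdist M k * gdist M (k + δ)) :=
    Finset.sum_le_sum fun k _ => term_ge M k δ hM0
  -- cardinality
  have hcard : (Finset.Icc n (M - n)).card = M - 2 * n + 1 := by
    rw [Nat.card_Icc]; omega
  have hcardR : ((M - 2 * n + 1 : ℕ) : ℝ) = (M : ℝ) - 2 * (n : ℝ) + 1 := by
    have h : (M - 2 * n + 1 : ℕ) = M + 1 - 2 * n := by omega
    rw [h, Nat.cast_sub (by omega)]
    push_cast
    ring
  -- cosine sum evaluation
  have hIcc : ∑ k ∈ Finset.Icc n (M - n), Real.cos (θ * (2 * (k : ℝ) + (δ : ℝ) + 1))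
      = ∑ i ∈ Finset.range (M - 2 * n + 1),
          Real.cos (θ * (2 * (n : ℝ) + (δ : ℝ)) + θ * (2 * (i : ℝ) + 1)) := by
    have h1 : Finset.Icc n (M - n) = Finset.Ico n (M - n + 1) := by
      rw [Finset.Ico_add_one_right_eq_Icc]
    rw [h1, Finset.sum_Ico_eq_sum_range]
    have h2 : M - n + 1 - n = M - 2 * n + 1 := by omega
    rw [h2]
    refine Finset.sum_congr rfl fun i _ => ?_
    congr 1
    push_cast
    ring
  have htel := cos_telescope θ (θ * (2 * (n : ℝ) + (δ : ℝ))) (M - 2 * n + 1)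
  have h2pi : θ * (2 * (n : ℝ) + (δ : ℝ)) + θ * (2 * ((M - 2 * n + 1 : ℕ) : ℝ))
      = θ * (δ : ℝ) - 2 * (n : ℝ) * θ + 2 * Real.pi := by
    rw [hcardR]
    linear_combination 2 * hθM
  have hsin_top : Real.sin (θ * (2 * (n : ℝ) + (δ : ℝ)) + θ * (2 * ((M - 2 * n + 1 : ℕ) : ℝ)))
      = Real.sin (θ * (δ : ℝ) - 2 * (n : ℝ) * θ) := by
    rw [h2pi, Real.sin_add_two_pi]
  have hdiff : Real.sin (θ * (δ : ℝ) - 2 * (n : ℝ) * θ)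
        - Real.sin (θ * (2 * (n : ℝ) + (δ : ℝ)))
      = -(2 * Real.cos (θ * (δ : ℝ)) * Real.sin (2 * (n : ℝ) * θ)) := by
    rw [Real.sin_sub_sin]
    have h1 : (θ * (δ : ℝ) - 2 * (n : ℝ) * θ - θ * (2 * (n : ℝ) + (δ : ℝ))) / 2
        = -(2 * (n : ℝ) * θ) := by ring
    have h2 : (θ * (δ : ℝ) - 2 * (n : ℝ) * θ + θ * (2 * (n : ℝ) + (δ : ℝ))) / 2
        = θ * (δ : ℝ) := by ring
    rw [h1, h2, Real.sin_neg]
    ring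
  have hSig : (∑ k ∈ Finset.Icc n (M - n), Real.cos (θ * (2 * (k : ℝ) + (δ : ℝ) + 1)))
        * (2 * Real.sin θ)
      = -(2 * Real.cos (θ * (δ : ℝ)) * Real.sin (2 * (n : ℝ) * θ)) := by
    rw [hIcc, htel, hsin_top, hdiff]
  -- rewrite the sum of lower bounds
  have hLHS : ∑ k ∈ Finset.Icc n (M - n),
      (1 / ((M : ℝ) + 1)) * (Real.cos (θ * (δ : ℝ)) - Real.cos (θ * (2 * (k : ℝ) + (δ : ℝ) + 1)))
      = (1 / ((M : ℝ) + 1)) * (((M : ℝ) - 2 * (n : ℝ) + 1) * Real.cos (θ * (δ : ℝ))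
          - ∑ k ∈ Finset.Icc n (M - n), Real.cos (θ * (2 * (k : ℝ) + (δ : ℝ) + 1))) := by
    rw [← Finset.mul_sum, Finset.sum_sub_distrib, Finset.sum_const, hcard, nsmul_eq_mul, hcardR]
  -- analytic facts
  have hxle : θ * (δ : ℝ) ≤ Real.pi / 2 := by
    have hδR : 2 * (δ : ℝ) ≤ (M : ℝ) + 1 := by exact_mod_cast hδ2
    rw [hθdef, div_mul_eq_mul_div, div_le_div_iff₀ hM0 (by norm_num)]
    nlinarith [Nat.cast_nonneg (α := ℝ) δ]
  have hx0 : 0 ≤ θ * (δ : ℝ) := by positivity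
  have hcos0 : 0 ≤ Real.cos (θ * (δ : ℝ)) :=
    Real.cos_nonneg_of_mem_Icc ⟨by linarith, hxle⟩
  have hcos1 : Real.cos (θ * (δ : ℝ)) ≤ 1 := Real.cos_le_one _
  have hcoslb : 1 - (θ * (δ : ℝ)) ^ 2 / 2 ≤ Real.cos (θ * (δ : ℝ)) :=
    Real.one_sub_sq_div_two_le_cos
  have hsin2n : 2 * (n : ℝ) * Real.sin θ - (2 * (n : ℝ) * θ) ^ 3 / 4
      ≤ Real.sin (2 * (n : ℝ) * θ) := by
    rcases Nat.eq_zero_or_pos n with hn | hn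
    · subst hn; simp
    · have hnpos : (1 : ℝ) ≤ (n : ℝ) := by exact_mod_cast hn
      have hn7 : 7 * (n : ℝ) ≤ (M : ℝ) := by
        have : (7 * n : ℕ) ≤ M := by omega
        exact_mod_cast this
      have h2nθpos : 0 < 2 * (n : ℝ) * θ := by positivity
      have h2nθ1 : 2 * (n : ℝ) * θ ≤ 1 := by
        rw [hθdef, ← mul_div_assoc, div_le_one hM0]
        nlinarith
      have hcube := Real.sin_gt_sub_cube h2nθpos
      have hsinθle : Real.sin θ ≤ θ := Real.sin_le hθpos.le
      have hns : 0 ≤ 2 * (n : ℝ) * (θ - Real.sin θ) :=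
        mul_nonneg (by positivity) (by linarith)
      linarith [hcube, hns, pow_pos h2nθpos 3]
  have hMs : Real.pi * (3 / 4) ≤ ((M : ℝ) + 1) * Real.sin θ := by
    nlinarith
  -- the key inequality, multiplied out
  have hM3pos : (0 : ℝ) < (M : ℝ) ^ 3 := by positivity
  have hkey : (1 - (1 / 2) * (θ * (δ : ℝ)) ^ 2 - Real.pi ^ 3 * (n : ℝ) ^ 3 / (M : ℝ) ^ 3)
        * (((M : ℝ) + 1) * (2 * Real.sin θ))
      ≤ (((M : ℝ) - 2 * (n : ℝ) + 1) * Real.cos (θ * (δ : ℝ))) * (2 * Real.sin θ)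
        + 2 * Real.cos (θ * (δ : ℝ)) * Real.sin (2 * (n : ℝ) * θ) := by
    set c1 := Real.cos (θ * (δ : ℝ))
    set s := Real.sin θ
    set t := Real.sin (2 * (n : ℝ) * θ)
    have hE : (0 : ℝ) ≤ (2 * (n : ℝ) * θ) ^ 3 / 4 := by positivity
    -- step 1: RHS ≥ 2 c1 (s(M+1) - E)
    have step1 : 2 * c1 * (((M : ℝ) + 1) * s - (2 * (n : ℝ) * θ) ^ 3 / 4)
        ≤ (((M : ℝ) - 2 * (n : ℝ) + 1) * c1) * (2 * s) + 2 * c1 * t := by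
      have hp1 : 0 ≤ c1 * (t - (2 * (n : ℝ) * s - (2 * (n : ℝ) * θ) ^ 3 / 4)) :=
        mul_nonneg hcos0 (by linarith)
      nlinarith [hp1]
    -- step 2
    have step2 : 2 * c1 * (((M : ℝ) + 1) * s) - 2 * ((2 * (n : ℝ) * θ) ^ 3 / 4)
        ≤ 2 * c1 * (((M : ℝ) + 1) * s - (2 * (n : ℝ) * θ) ^ 3 / 4) := by
      have hp2 : 0 ≤ (2 * (n : ℝ) * θ) ^ 3 / 4 * (1 - c1) := mul_nonneg hE (by linarith)
      nlinarith [hp2]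
    -- step 3
    have step3 : 2 * (1 - (θ * (δ : ℝ)) ^ 2 / 2) * (((M : ℝ) + 1) * s)
        ≤ 2 * c1 * (((M : ℝ) + 1) * s) := by
      have hMspos : 0 < ((M : ℝ) + 1) * s := by positivity
      have hp3 : 0 ≤ (c1 - (1 - (θ * (δ : ℝ)) ^ 2 / 2)) * (((M : ℝ) + 1) * s) :=
        mul_nonneg (by linarith) hMspos.le
      nlinarith [hp3]
    -- step 4 : error term domination
    have step4 : 2 * ((2 * (n : ℝ) * θ) ^ 3 / 4)
        ≤ Real.pi ^ 3 * (n : ℝ) ^ 3 / (M : ℝ) ^ 3 * (((M : ℝ) + 1) * (2 * s)) := by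
      have hnn : (0 : ℝ) ≤ (n : ℝ) := Nat.cast_nonneg n
      have h1 : (2 * (n : ℝ) * θ) ^ 3 = 8 * (n : ℝ) ^ 3 * θ ^ 3 := by ring
      have hθcube : θ ^ 3 = Real.pi ^ 3 / ((M : ℝ) + 1) ^ 3 := by
        rw [hθdef]; rw [div_pow]
      have hMM : (M : ℝ) ^ 3 ≤ ((M : ℝ) + 1) ^ 3 := by nlinarith
      have hM13 : (0 : ℝ) < ((M : ℝ) + 1) ^ 3 := by positivity
      -- LHS = 4 n³ π³/(M+1)³ ; RHS ≥ π³n³/M³ · (3π/2) ≥ π³n³/M³ · 4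
      have hcnn : (0 : ℝ) ≤ Real.pi ^ 3 * (n : ℝ) ^ 3 / (M : ℝ) ^ 3 := by positivity
      have hRlb : Real.pi ^ 3 * (n : ℝ) ^ 3 / (M : ℝ) ^ 3 * (Real.pi * (3 / 2))
          ≤ Real.pi ^ 3 * (n : ℝ) ^ 3 / (M : ℝ) ^ 3 * (((M : ℝ) + 1) * (2 * s)) :=
        mul_le_mul_of_nonneg_left (by linarith [hMs]) hcnn
      have hπ3 : (4 : ℝ) ≤ Real.pi * (3 / 2) := by linarith [Real.pi_gt_three]
      have hL : 2 * ((2 * (n : ℝ) * θ) ^ 3 / 4) = 4 * (n : ℝ) ^ 3 * (Real.pi ^ 3 / ((M : ℝ) + 1) ^ 3) := by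
        rw [h1, hθcube]; ring
      have hd : Real.pi ^ 3 / ((M : ℝ) + 1) ^ 3 ≤ Real.pi ^ 3 / (M : ℝ) ^ 3 := by
        apply div_le_div_of_nonneg_left (by positivity) hM3pos hMM
      have hmid : 4 * (n : ℝ) ^ 3 * (Real.pi ^ 3 / ((M : ℝ) + 1) ^ 3)
          ≤ 4 * (Real.pi ^ 3 * (n : ℝ) ^ 3 / (M : ℝ) ^ 3) := by
        have := mul_le_mul_of_nonneg_left hd (show (0 : ℝ) ≤ 4 * (n : ℝ) ^ 3 by positivity)
        calc 4 * (n : ℝ) ^ 3 * (Real.pi ^ 3 / ((M : ℝ) + 1) ^ 3)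
            ≤ 4 * (n : ℝ) ^ 3 * (Real.pi ^ 3 / (M : ℝ) ^ 3) := this
          _ = 4 * (Real.pi ^ 3 * (n : ℝ) ^ 3 / (M : ℝ) ^ 3) := by ring
      have hmid2 : 4 * (Real.pi ^ 3 * (n : ℝ) ^ 3 / (M : ℝ) ^ 3)
          ≤ Real.pi ^ 3 * (n : ℝ) ^ 3 / (M : ℝ) ^ 3 * (Real.pi * (3 / 2)) := by
        have := mul_le_mul_of_nonneg_left hπ3 hcnn
        linarith
      linarith [hL, hmid, hmid2, hRlb]
    linarith [step1, step2, step3, step4]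
  -- conclude
  rw [ge_iff_le]
  have hπδ : Real.pi * (δ : ℝ) / ((M : ℝ) + 1) = θ * (δ : ℝ) := by
    rw [hθdef]; ring
  rw [hπδ]
  refine le_trans ?_ (le_trans (le_of_eq hLHS.symm) hsum)
  rw [mul_comm (1 / ((M : ℝ) + 1)), ← div_eq_mul_one_div, le_div_iff₀ hM0]
  have h2s : (0 : ℝ) < 2 * Real.sin θ := by positivity
  rw [← mul_le_mul_iff_of_pos_right h2s]
  calc (1 - 1 / 2 * (θ * (δ : ℝ)) ^ 2 - Real.pi ^ 3 * (n : ℝ) ^ 3 / (M : ℝ) ^ 3)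
        * ((M : ℝ) + 1) * (2 * Real.sin θ)
      = (1 - (1 / 2) * (θ * (δ : ℝ)) ^ 2 - Real.pi ^ 3 * (n : ℝ) ^ 3 / (M : ℝ) ^ 3)
        * (((M : ℝ) + 1) * (2 * Real.sin θ)) := by ring
    _ ≤ (((M : ℝ) - 2 * (n : ℝ) + 1) * Real.cos (θ * (δ : ℝ))) * (2 * Real.sin θ)
        + 2 * Real.cos (θ * (δ : ℝ)) * Real.sin (2 * (n : ℝ) * θ) := hkey
    _ = (((M : ℝ) - 2 * (n : ℝ) + 1) * Real.cos (θ * (δ : ℝ))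
          - ∑ k ∈ Finset.Icc n (M - n), Real.cos (θ * (2 * (k : ℝ) + (δ : ℝ) + 1)))
        * (2 * Real.sin θ) := by
      rw [sub_mul, hSig]; ring
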